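/- (Sketch-size corollary.) Let m, c be positive integers and 0 < δ ≤ 1. Let v : Fin N → ℝ≥0 be a weighted set with |supp(v)| ≤ m, and let C ⊆ Fin N be a candidate set with supp(v) ⊆ C and |C| ≤ c · m. If N_W > 2m and δ · 2^{N_D} > c · m (equivalently, N_D > log₂(cm/δ)), then for H drawn uniformly at random in the random-hash model, with probability at least 1 − δ all weights of v are recovered: CM_H(i, S_H(v)) = v i for every i ∈ C. -/

import Mathlib

open Finset

/-- The primitive sketch of a weighted set `v` under hash function `h`. -/
def sketch {N NW : ℕ} (h : Fin N → Fin NW) (v : Fin N → NNReal) : Fin NW → NNReal :=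
  fun k => ∑ i ∈ Finset.univ.filter (fun i => h i = k), v i

/-- The support of a weighted set, as a finset. -/
noncomputable def supp {N : ℕ} (v : Fin N → NNReal) : Finset (Fin N) :=
  Finset.univ.filter (fun i => v i ≠ 0)

/-- The count-min sketch of `v` under the family `H`: the `j`-th row is the
primitive sketch of `v` under `H j`. -/
def cmSketch {N NW ND : ℕ} (H : Fin ND → Fin N → Fin NW) (v : Fin N → NNReal) :
    Fin ND → Fin NW → NNReal :=
  fun j => sketch (H j) v

/-- The count-min lookup of `i` in an `ND × NW` matrix `M`, relative to the
family `H`: the minimum over `j` of `M[j, h_j(i)]`. -/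
noncomputable def cmLookup {N NW ND : ℕ} (H : Fin ND → Fin N → Fin NW)
    (M : Fin ND → Fin NW → NNReal) (i : Fin N) : NNReal :=
  ⨅ j, M j (H j i)

lemma le_sketch_aux {N NW : ℕ} (h : Fin N → Fin NW) (v : Fin N → NNReal) (i : Fin N) :
    v i ≤ sketch h v (h i) := by
  unfold sketch
  exact Finset.single_le_sum (fun _ _ => zero_le) (by simp)

lemma sketch_eq_aux {N NW : ℕ} (h : Fin N → Fin NW) (v : Fin N → NNReal) (i : Fin N)
    (hg : ∀ i' ∈ supp v, i' ≠ i → h i' ≠ h i) :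
    sketch h v (h i) = v i := by
  unfold sketch
  refine Finset.sum_eq_single i (fun i' hi' hne => ?_) (by simp)
  by_contra hvz
  exact hg i' (by simp [supp, hvz]) hne (by simpa using hi')

lemma recover_aux {N NW ND : ℕ} (hND : 0 < ND) (H : Fin ND → Fin N → Fin NW)
    (v : Fin N → NNReal) (i : Fin N)
    (hg : ∃ j, ∀ i' ∈ supp v, i' ≠ i → H j i' ≠ H j i) :
    cmLookup H (cmSketch H v) i = v i := by
  obtain ⟨j, hj⟩ := hg
  have : Nonempty (Fin ND) := ⟨⟨0, hND⟩⟩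
  refine le_antisymm ?_ ?_
  · calc cmLookup H (cmSketch H v) i ≤ cmSketch H v j (H j i) :=
        ciInf_le (OrderBot.bddBelow _) j
      _ = v i := sketch_eq_aux (H j) v i hj
  · exact le_ciInf fun j' => le_sketch_aux (H j') v i

lemma card_collide_aux {N NW : ℕ} (i i' : Fin N) (hne : i' ≠ i) :
    (Finset.univ.filter (fun h : Fin N → Fin NW => h i' = h i)).card = NW ^ (N - 1) := by
  rw [← Fintype.card_subtype]
  have e : {h : Fin N → Fin NW // h i' = h i} ≃ ({x : Fin N // x ≠ i'} → Fin NW) :=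
    { toFun := fun h x => h.1 x.1
      invFun := fun g => ⟨fun x => if hx : x = i' then g ⟨i, fun h => hne h.symm⟩
          else g ⟨x, hx⟩, by
        dsimp only
        rw [dif_pos rfl, dif_neg (fun h : i = i' => hne h.symm)]⟩
      left_inv := fun h => Subtype.ext (funext fun x => by
        dsimp only
        by_cases hx : x = i'
        · rw [dif_pos hx, hx]; exact h.2.symm
        · rw [dif_neg hx])
      right_inv := fun g => funext fun x => by
        dsimp only
        rw [dif_neg x.2]
  }
  have hcard : Fintype.card {x : Fin N // x ≠ i'} = N - 1 := by
    have : Fintype.card {x : Fin N // ¬ x = i'} = N - 1 := by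
      simp [Fintype.card_subtype_compl, Fintype.card_subtype_eq]
    exact this
  rw [Fintype.card_congr e, Fintype.card_fun, hcard, Fintype.card_fin]

/-- Sketch-size corollary: if `|supp v| ≤ m`, `supp v ⊆ C`, `|C| ≤ c * m`,
`NW > 2 * m` and `δ * 2 ^ ND > c * m` (with `0 < δ ≤ 1`), then for `H` drawn
uniformly at random, with probability at least `1 - δ` all weights of `v` are
recovered: `CM_H(i, S_H(v)) = v i` for every `i ∈ C`. -/
theorem sketch_size_recovery
    {N NW ND : ℕ} (hN : 0 < N) (hNW : 0 < NW) (hND : 0 < ND)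
    (m c : ℕ) (hm : 0 < m) (hc : 0 < c)
    (δ : ℝ) (hδ0 : 0 < δ) (hδ1 : δ ≤ 1)
    (v : Fin N → NNReal) (hsupp : (supp v).card ≤ m)
    (C : Finset (Fin N)) (hsub : supp v ⊆ C) (hC : C.card ≤ c * m)
    (hW : 2 * m < NW)
    (hD : ((c * m : ℕ) : ℝ) < δ * 2 ^ ND) :
    (1 : ℝ) - δ ≤
      ((Finset.univ.filter (fun H : Fin ND → Fin N → Fin NW =>
          ∀ i ∈ C, cmLookup H (cmSketch H v) i = v i)).card : ℝ)
        / (Fintype.card (Fin ND → Fin N → Fin NW) : ℝ) := by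
  classical
  set G := Finset.univ.filter (fun H : Fin ND → Fin N → Fin NW =>
      ∀ i ∈ C, cmLookup H (cmSketch H v) i = v i) with hG
  -- bad sets
  set Bi := fun i : Fin N => Finset.univ.filter
      (fun H : Fin ND → Fin N → Fin NW =>
        ∀ j, ∃ i' ∈ supp v, i' ≠ i ∧ H j i' = H j i) with hBi
  set B := C.biUnion Bi with hB
  -- card of single-hash collision set
  have hsingle : ∀ i : Fin N,
      (Finset.univ.filter (fun h : Fin N → Fin NW =>
        ∃ i' ∈ supp v, i' ≠ i ∧ h i' = h i)).card ≤ m * NW ^ (N - 1) := by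
    intro i
    have hsubset : (Finset.univ.filter (fun h : Fin N → Fin NW =>
        ∃ i' ∈ supp v, i' ≠ i ∧ h i' = h i)) ⊆
        ((supp v).erase i).biUnion
          (fun i' => Finset.univ.filter (fun h : Fin N → Fin NW => h i' = h i)) := by
      intro h hh
      simp only [mem_filter, mem_univ, true_and] at hh
      obtain ⟨i', hi', hne, heq⟩ := hh
      exact Finset.mem_biUnion.2 ⟨i', Finset.mem_erase.2 ⟨hne, hi'⟩, by simp [heq]⟩
    calc _ ≤ _ := Finset.card_le_card hsubset
      _ ≤ ∑ i' ∈ (supp v).erase i,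
          (Finset.univ.filter (fun h : Fin N → Fin NW => h i' = h i)).card :=
        Finset.card_biUnion_le
      _ = ∑ i' ∈ (supp v).erase i, NW ^ (N - 1) := by
        refine Finset.sum_congr rfl fun i' hi' => ?_
        exact card_collide_aux i i' (Finset.mem_erase.1 hi').1
      _ = ((supp v).erase i).card * NW ^ (N - 1) := by
        rw [Finset.sum_const, smul_eq_mul]
      _ ≤ m * NW ^ (N - 1) := by
        exact Nat.mul_le_mul_right _
          (le_trans (Finset.card_erase_le) hsupp)
  -- card of Bi
  have hBicard : ∀ i : Fin N, (Bi i).card ≤ (m * NW ^ (N - 1)) ^ ND := by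
    intro i
    have : (Bi i).card = (Finset.univ.filter (fun h : Fin N → Fin NW =>
        ∃ i' ∈ supp v, i' ≠ i ∧ h i' = h i)).card ^ ND := by
      rw [hBi]
      rw [← Fintype.card_subtype, ← Fintype.card_subtype]
      rw [Fintype.card_congr (Equiv.subtypePiEquivPi
        (p := fun (_ : Fin ND) (h : Fin N → Fin NW) =>
          ∃ i' ∈ supp v, i' ≠ i ∧ h i' = h i))]
      rw [Fintype.card_fun, Fintype.card_fin]
    rw [this]
    exact Nat.pow_le_pow_left (hsingle i) ND
  -- card of B
  have hBcard : B.card ≤ c * m * (m * NW ^ (N - 1)) ^ ND := by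
    calc B.card ≤ ∑ i ∈ C, (Bi i).card := Finset.card_biUnion_le
      _ ≤ ∑ _i ∈ C, (m * NW ^ (N - 1)) ^ ND := Finset.sum_le_sum fun i _ => hBicard i
      _ = C.card * (m * NW ^ (N - 1)) ^ ND := by rw [Finset.sum_const, smul_eq_mul]
      _ ≤ c * m * (m * NW ^ (N - 1)) ^ ND := Nat.mul_le_mul_right _ hC
  -- complement of B is good
  have hcompl : Bᶜ ⊆ G := by
    intro H hH
    rw [Finset.mem_compl] at hH
    rw [hG, Finset.mem_filter]
    refine ⟨Finset.mem_univ _, fun i hi => ?_⟩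
    have hnb : H ∉ Bi i := fun hmem => hH (Finset.mem_biUnion.2 ⟨i, hi, hmem⟩)
    rw [hBi] at hnb
    simp only [Finset.mem_filter, Finset.mem_univ, true_and, not_forall] at hnb
    obtain ⟨j, hj⟩ := hnb
    push_neg at hj
    exact recover_aux hND H v i ⟨j, fun i' hi' hne heq => hj i' hi' hne heq⟩
  -- total
  set T := (NW ^ N) ^ ND with hT
  have htotal : Fintype.card (Fin ND → Fin N → Fin NW) = T := by
    simp [Fintype.card_fun, hT]
  have hTpos : 0 < T := pow_pos (pow_pos hNW _) _ -- maybe wrong name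
  -- key nat inequality
  have hkey : 2 * m * NW ^ (N - 1) ≤ NW ^ N := by
    have h1 : NW ^ N = NW * NW ^ (N - 1) := by
      conv_lhs => rw [← Nat.sub_add_cancel hN]
      rw [pow_succ]
      ring
    rw [h1]
    exact Nat.mul_le_mul_right _ (by omega)
  have hBT : B.card * 2 ^ ND ≤ c * m * T := by
    calc B.card * 2 ^ ND ≤ c * m * (m * NW ^ (N - 1)) ^ ND * 2 ^ ND :=
        Nat.mul_le_mul_right _ hBcard
      _ = c * m * (2 * m * NW ^ (N - 1)) ^ ND := by
        rw [mul_assoc, ← mul_pow]; ring_nf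
      _ ≤ c * m * (NW ^ N) ^ ND := Nat.mul_le_mul_left _ (Nat.pow_le_pow_left hkey ND)
  -- real estimates
  have hTR : (0:ℝ) < (T:ℝ) := by exact_mod_cast hTpos
  have h2R : (0:ℝ) < (2:ℝ) ^ ND := by positivity
  have hBδ : (B.card : ℝ) ≤ δ * T := by
    have h1 : (B.card : ℝ) * 2 ^ ND ≤ (↑(c * m)) * T := by
      have := hBT
      push_cast [← Nat.cast_mul]
      exact_mod_cast this
    have h2 : (↑(c * m) : ℝ) * T ≤ δ * 2 ^ ND * T :=
      mul_le_mul_of_nonneg_right (le_of_lt hD) (le_of_lt hTR)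
    have h3 : (B.card : ℝ) * 2 ^ ND ≤ δ * T * 2 ^ ND := by
      calc (B.card : ℝ) * 2 ^ ND ≤ δ * 2 ^ ND * T := le_trans h1 h2
        _ = δ * T * 2 ^ ND := by ring
    exact le_of_mul_le_mul_right h3 h2R
  have hBleT : B.card ≤ T := by
    rw [← htotal]
    exact le_trans (Finset.card_le_card (Finset.subset_univ _)) (le_of_eq (by simp))
  have hGge : (T : ℝ) - B.card ≤ G.card := by
    have h1 : T - B.card ≤ G.card := by
      calc T - B.card = Bᶜ.card := by rw [Finset.card_compl, htotal]
        _ ≤ G.card := Finset.card_le_card hcompl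
    have := Nat.cast_le (α := ℝ).2 h1
    rwa [Nat.cast_sub hBleT] at this
  rw [htotal, le_div_iff₀ hTR]
  have : (1 - δ) * T = T - δ * T := by ring
  rw [this]
  linarith
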